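/- Let N ≥ 2 and λ ∈ ℤ^{N−1}. Then Q_N(λ) ≡ (N − t(λ))·t(λ) (mod 2N). -/
import Mathlib


/-- Triality `t(λ) = Σ_{j=1}^{N−1} j·λ_j` (0-indexed: `j ↦ j+1`). -/
def triN (N : ℕ) (f : Fin (N - 1) → ℤ) : ℤ := ∑ j : Fin (N - 1), ((j.val : ℤ) + 1) * f j

/-- `B_N(λ,μ) = Σ i(N−i)λ_iμ_i + Σ_{i<j} i(N−j)(λ_iμ_j+λ_jμ_i)`, so `Q_N(λ) = B_N(λ,λ)`. -/
def BN (N : ℕ) (f g : Fin (N - 1) → ℤ) : ℤ :=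
  (∑ i : Fin (N - 1), ((i.val : ℤ) + 1) * ((N : ℤ) - ((i.val : ℤ) + 1)) * f i * g i) +
    ∑ i : Fin (N - 1), ∑ j : Fin (N - 1), if i.val < j.val then
      ((i.val : ℤ) + 1) * ((N : ℤ) - ((j.val : ℤ) + 1)) * (f i * g j + f j * g i) else 0

private lemma sym_split (n : ℕ) (a : Fin n → Fin n → ℤ) (hsym : ∀ i j, a i j = a j i) :
    ∑ i : Fin n, ∑ j : Fin n, a i j
      = (∑ i : Fin n, a i i)
        + ∑ i : Fin n, ∑ j : Fin n, (if i.val < j.val then 2 * a i j else 0) := by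
  have hdecomp : ∀ i j : Fin n, a i j
      = (if i.val < j.val then a i j else 0) + (if j.val < i.val then a i j else 0)
        + (if i = j then a i j else 0) := by
    intro i j
    rcases Nat.lt_trichotomy i.val j.val with h | h | h
    · simp [h, Nat.lt_asymm h, fun hh : i = j => (by omega : False) ]
      intro hh; exact absurd (hh ▸ h) (lt_irrefl _)
    · have hij : i = j := Fin.ext h
      simp [hij]
    · have : ¬ i.val < j.val := Nat.lt_asymm h
      simp [h, this]
      intro hh; exact absurd (hh ▸ h) (lt_irrefl _)
  calc ∑ i : Fin n, ∑ j : Fin n, a i j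
      = ∑ i : Fin n, ∑ j : Fin n,
          ((if i.val < j.val then a i j else 0) + (if j.val < i.val then a i j else 0)
            + (if i = j then a i j else 0)) := by
        refine Finset.sum_congr rfl fun i _ => Finset.sum_congr rfl fun j _ => hdecomp i j
    _ = (∑ i : Fin n, ∑ j : Fin n, (if i.val < j.val then a i j else 0))
        + (∑ i : Fin n, ∑ j : Fin n, (if j.val < i.val then a i j else 0))
        + ∑ i : Fin n, ∑ j : Fin n, (if i = j then a i j else 0) := by
        simp [Finset.sum_add_distrib]
    _ = (∑ i : Fin n, ∑ j : Fin n, (if i.val < j.val then a i j else 0))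
        + (∑ i : Fin n, ∑ j : Fin n, (if i.val < j.val then a i j else 0))
        + ∑ i : Fin n, a i i := by
        congr 1
        · congr 1
          rw [Finset.sum_comm]
          refine Finset.sum_congr rfl fun i _ => Finset.sum_congr rfl fun j _ => ?_
          split_ifs with h
          · exact hsym j i
          · rfl
        · refine Finset.sum_congr rfl fun i _ => ?_
          simp
    _ = (∑ i : Fin n, a i i)
        + ∑ i : Fin n, ∑ j : Fin n, (if i.val < j.val then 2 * a i j else 0) := by
        rw [← Finset.sum_add_distrib]
        have : ∀ i : Fin n,
            ((∑ j : Fin n, (if i.val < j.val then a i j else 0))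
              + ∑ j : Fin n, (if i.val < j.val then a i j else 0))
            = ∑ j : Fin n, (if i.val < j.val then 2 * a i j else 0) := by
          intro i
          rw [← Finset.sum_add_distrib]
          refine Finset.sum_congr rfl fun j _ => ?_
          split_ifs <;> ring
        rw [Finset.sum_congr rfl fun i _ => this i]
        ring

theorem statement15 (N : ℕ) (hN : 2 ≤ N) (f : Fin (N - 1) → ℤ) :
    (2 * (N : ℤ)) ∣ (BN N f f - ((N : ℤ) - triN N f) * triN N f) := by
  have htt : triN N f * triN N f
      = (∑ i : Fin (N - 1), (((i.val : ℤ) + 1) * f i) * (((i.val : ℤ) + 1) * f i))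
        + ∑ i : Fin (N - 1), ∑ j : Fin (N - 1),
            (if i.val < j.val then 2 * ((((i.val : ℤ) + 1) * f i) * (((j.val : ℤ) + 1) * f j))
              else 0) := by
    rw [triN, Finset.sum_mul_sum]
    exact sym_split (N - 1) (fun i j => (((i.val : ℤ) + 1) * f i) * (((j.val : ℤ) + 1) * f j))
      (fun i j => by ring)
  have key : BN N f f - ((N : ℤ) - triN N f) * triN N f
      = (∑ i : Fin (N - 1), (N : ℤ) * ((i.val : ℤ) + 1) * (f i * f i - f i))
        + ∑ i : Fin (N - 1), ∑ j : Fin (N - 1),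
            (if i.val < j.val then 2 * (N : ℤ) * (((i.val : ℤ) + 1) * (f i * f j)) else 0) := by
    have h1 : BN N f f - ((N : ℤ) - triN N f) * triN N f
        = BN N f f - (N : ℤ) * triN N f + triN N f * triN N f := by ring
    rw [h1, htt, BN]
    rw [show (N : ℤ) * triN N f = ∑ i : Fin (N - 1), (N : ℤ) * (((i.val : ℤ) + 1) * f i) by
      rw [triN, Finset.mul_sum]]
    have A : (∑ i : Fin (N - 1), ((i.val : ℤ) + 1) * ((N : ℤ) - ((i.val : ℤ) + 1)) * f i * f i)
        - (∑ i : Fin (N - 1), (N : ℤ) * (((i.val : ℤ) + 1) * f i))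
        + (∑ i : Fin (N - 1), (((i.val : ℤ) + 1) * f i) * (((i.val : ℤ) + 1) * f i))
        = ∑ i : Fin (N - 1), (N : ℤ) * ((i.val : ℤ) + 1) * (f i * f i - f i) := by
      rw [← Finset.sum_sub_distrib, ← Finset.sum_add_distrib]
      exact Finset.sum_congr rfl fun i _ => by ring
    have B : (∑ i : Fin (N - 1), ∑ j : Fin (N - 1), if i.val < j.val then
          ((i.val : ℤ) + 1) * ((N : ℤ) - ((j.val : ℤ) + 1)) * (f i * f j + f j * f i) else 0)
        + (∑ i : Fin (N - 1), ∑ j : Fin (N - 1),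
            (if i.val < j.val then 2 * ((((i.val : ℤ) + 1) * f i) * (((j.val : ℤ) + 1) * f j))
              else 0))
        = ∑ i : Fin (N - 1), ∑ j : Fin (N - 1),
            (if i.val < j.val then 2 * (N : ℤ) * (((i.val : ℤ) + 1) * (f i * f j)) else 0) := by
      rw [← Finset.sum_add_distrib]
      refine Finset.sum_congr rfl fun i _ => ?_
      rw [← Finset.sum_add_distrib]
      refine Finset.sum_congr rfl fun j _ => ?_
      split_ifs <;> ring
    linarith [A, B]
  rw [key]
  apply dvd_add
  · apply Finset.dvd_sum
    intro i _
    obtain ⟨k, hk⟩ := Int.even_mul_succ_self (f i - 1)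
    exact ⟨((i.val : ℤ) + 1) * k, by linear_combination ((N : ℤ) * ((i.val : ℤ) + 1)) * hk⟩
  · apply Finset.dvd_sum
    intro i _
    apply Finset.dvd_sum
    intro j _
    split_ifs
    · exact ⟨((i.val : ℤ) + 1) * (f i * f j), by ring⟩
    · exact dvd_zero _
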